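/- Let n ≥ 2 and let k be an integer with 1 ≤ k ≤ n/2. Let A and B be symmetric n×n matrices over ℂ such that A_{ij} = 0 and B_{ij} = 0 for all indices with i ≤ k and j ≤ n−k. Then the binary form det(Ax − By) ∈ ℂ[x,y] has discriminant zero; equivalently, there exists (x₀,y₀) ∈ ℂ² with (x₀,y₀) ≠ (0,0) such that the square of the linear form (y₀x − x₀y) divides the homogeneous polynomial det(Ax − By) in ℂ[x,y]. -/

import Mathlib

open MvPolynomial Matrix

noncomputable section

/-- The bivariate polynomial `det (A x - B y)`. -/
def pairDet {R : Type*} [CommRing R] {n : ℕ} (A B : Matrix (Fin n) (Fin n) R) :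
    MvPolynomial (Fin 2) R :=
  (Matrix.of fun i j => (C (A i j) * X 0 - C (B i j) * X 1 : MvPolynomial (Fin 2) R)).det

lemma degree_fin2 (m : Fin 2 →₀ ℕ) : m.degree = m 0 + m 1 := by
  rw [Finsupp.degree, show m 0 + m 1 = ∑ i : Fin 2, m i from (Fin.sum_univ_two m).symm]
  exact Finset.sum_subset (Finset.subset_univ _)
    (fun i _ hi => Finsupp.notMem_support_iff.mp hi)

lemma mem_support_degree {q : MvPolynomial (Fin 2) ℂ} {d : ℕ} (hq : q.IsHomogeneous d)
    {m : Fin 2 →₀ ℕ} (hm : m ∈ q.support) : m 0 + m 1 = d := by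
  rw [← degree_fin2]
  by_contra h
  exact (MvPolynomial.mem_support_iff.mp hm) (hq.coeff_eq_zero h)

lemma eval01_eq_coeff {q : MvPolynomial (Fin 2) ℂ} {d : ℕ} (hq : q.IsHomogeneous d) :
    eval ![0, 1] q = coeff (Finsupp.single 1 d) q := by
  rw [eval_eq, Finset.sum_eq_single (Finsupp.single 1 d)]
  · have h1 : ∀ i ∈ (Finsupp.single (1 : Fin 2) d).support,
        (![0, 1] : Fin 2 → ℂ) i ^ ((Finsupp.single (1 : Fin 2) d) i) = 1 := by
      intro i hi
      have h2 := Finsupp.support_single_subset hi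
      simp only [Finset.mem_singleton] at h2
      subst h2
      simp
    rw [Finset.prod_eq_one h1, mul_one]
  · intro m hm hne
    have hdeg := mem_support_degree hq hm
    have h0 : m 0 ≠ 0 := by
      intro h
      apply hne
      ext i
      fin_cases i <;> simp [Finsupp.single_apply] <;> omega
    have h1 : (∏ i ∈ m.support, (![0, 1] : Fin 2 → ℂ) i ^ m i) = 0 := by
      apply Finset.prod_eq_zero (Finsupp.mem_support_iff.mpr h0)
      simp [zero_pow h0]
    rw [h1, mul_zero]
  · intro h
    simp [MvPolynomial.notMem_support_iff.mp h]

lemma X0_dvd {q : MvPolynomial (Fin 2) ℂ} {d : ℕ} (hq : q.IsHomogeneous d)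
    (h : coeff (Finsupp.single 1 d) q = 0) : (X 0 : MvPolynomial (Fin 2) ℂ) ∣ q := by
  rw [q.as_sum]
  apply Finset.dvd_sum
  intro m hm
  rw [MvPolynomial.X_dvd_monomial]
  by_cases h0 : m 0 = 0
  · left
    have hdeg := mem_support_degree hq hm
    have hms : m = Finsupp.single 1 d := by
      ext i
      fin_cases i <;> simp [Finsupp.single_apply] <;> omega
    rw [hms]
    exact h
  · right; exact h0

lemma X1_dvd {q : MvPolynomial (Fin 2) ℂ} {d : ℕ} (hq : q.IsHomogeneous d)
    (h : coeff (Finsupp.single 0 d) q = 0) : (X 1 : MvPolynomial (Fin 2) ℂ) ∣ q := by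
  rw [q.as_sum]
  apply Finset.dvd_sum
  intro m hm
  rw [MvPolynomial.X_dvd_monomial]
  by_cases h0 : m 1 = 0
  · left
    have hdeg := mem_support_degree hq hm
    have hms : m = Finsupp.single 0 d := by
      ext i
      fin_cases i <;> simp [Finsupp.single_apply] <;> omega
    rw [hms]
    exact h
  · right; exact h0

lemma aeval_eq_eval' (f : Fin 2 → ℂ) (p : MvPolynomial (Fin 2) ℂ) :
    (MvPolynomial.aeval f p : ℂ) = eval f p := by
  rw [MvPolynomial.aeval_def, MvPolynomial.eval, Algebra.algebraMap_self]
  rfl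

lemma exists_linear_dvd (d : ℕ) (hd : d ≠ 0) (p : MvPolynomial (Fin 2) ℂ)
    (hp : p.IsHomogeneous d) :
    ∃ x₀ y₀ : ℂ, (x₀, y₀) ≠ (0, 0) ∧
      (C y₀ * X 0 - C x₀ * X 1 : MvPolynomial (Fin 2) ℂ) ∣ p := by
  by_cases hc : coeff (Finsupp.single 0 d) p = 0
  · refine ⟨1, 0, by simp, ?_⟩
    have h1 : (X 1 : MvPolynomial (Fin 2) ℂ) ∣ p := X1_dvd hp hc
    have h2 : (C (0:ℂ) * X 0 - C 1 * X 1 : MvPolynomial (Fin 2) ℂ) = -(X 1) := by simp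
    rw [h2, neg_dvd]
    exact h1
  · -- extract a root of the one-variable polynomial p(X, 1)
    set g : Fin 2 → Polynomial ℂ := ![Polynomial.X, 1] with hg
    set f : Polynomial ℂ := MvPolynomial.aeval g p with hf
    have hfd : f.coeff d = coeff (Finsupp.single 0 d) p := by
      rw [hf, p.as_sum, map_sum, Polynomial.finset_sum_coeff,
        Finset.sum_eq_single (Finsupp.single 0 d)]
      · rw [MvPolynomial.aeval_monomial, Finsupp.prod_single_index (by simp)]
        simp [hg, Polynomial.coeff_C_mul, Polynomial.coeff_X_pow]
      · intro m hm hne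
        have hdeg := mem_support_degree hp hm
        rw [MvPolynomial.aeval_monomial]
        have hprod : (m.prod fun i k => g i ^ k) = Polynomial.X ^ (m 0) := by
          rw [Finsupp.prod_fintype _ _ (by simp), Fin.prod_univ_two]
          simp [hg]
        rw [hprod]
        have hm0 : m 0 ≠ d := by
          intro h
          apply hne
          ext i
          fin_cases i <;> simp [Finsupp.single_apply] <;> omega
        simp [Polynomial.coeff_C_mul, Polynomial.coeff_X_pow, Ne.symm hm0]
      · intro h
        simp [MvPolynomial.notMem_support_iff.mp h]
    have hfne : f ≠ 0 := by
      intro h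
      rw [h] at hfd
      exact hc (by simpa using hfd.symm)
    have hdeg : 0 < f.degree := by
      have h1 : d ≤ f.natDegree := Polynomial.le_natDegree_of_ne_zero (hfd ▸ hc)
      rw [Polynomial.degree_eq_natDegree hfne]
      exact_mod_cast Nat.pos_of_ne_zero (fun h0 => hd (by omega))
    obtain ⟨t₀, ht₀⟩ := Complex.exists_root hdeg
    have heval : eval ![t₀, 1] p = 0 := by
      have h1 : (Polynomial.aeval t₀ : Polynomial ℂ →ₐ[ℂ] ℂ) (MvPolynomial.aeval g p)
          = MvPolynomial.aeval (fun i => (Polynomial.aeval t₀) (g i)) p :=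
        MvPolynomial.comp_aeval_apply _ _ _
      have h2 : (fun i => (Polynomial.aeval t₀) (g i)) = ![t₀, 1] := by
        funext i
        fin_cases i <;> simp [hg]
      rw [h2] at h1
      rw [← aeval_eq_eval', ← h1]
      simpa [Polynomial.aeval_def, hf] using ht₀
    -- change of variables
    set g1 : Fin 2 → MvPolynomial (Fin 2) ℂ := ![X 0 + C t₀ * X 1, X 1] with hg1
    set σA : MvPolynomial (Fin 2) ℂ →ₐ[ℂ] MvPolynomial (Fin 2) ℂ :=
      MvPolynomial.aeval g1 with hσA
    set τ : MvPolynomial (Fin 2) ℂ →ₐ[ℂ] MvPolynomial (Fin 2) ℂ :=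
      MvPolynomial.aeval ![X 0 - C t₀ * X 1, X 1] with hτ
    set q : MvPolynomial (Fin 2) ℂ := σA p with hq
    have hqhom : q.IsHomogeneous d := by
      have := hp.aeval g1 (fun i => by
        fin_cases i
        · simpa [hg1] using (MvPolynomial.isHomogeneous_X ℂ (0 : Fin 2)).add
            (MvPolynomial.isHomogeneous_C_mul_X t₀ (1 : Fin 2))
        · simpa [hg1] using MvPolynomial.isHomogeneous_X ℂ (1 : Fin 2))
      simpa [hq, hσA] using this
    have heval01 : eval ![0, 1] q = 0 := by
      have h1 : (MvPolynomial.aeval ![(0:ℂ), 1] : MvPolynomial (Fin 2) ℂ →ₐ[ℂ] ℂ) (σA p)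
          = MvPolynomial.aeval (fun i => (MvPolynomial.aeval ![(0:ℂ), 1]) (g1 i)) p :=
        MvPolynomial.comp_aeval_apply _ _ _
      have h2 : (fun i => (MvPolynomial.aeval (![(0:ℂ), 1])) (g1 i)) = ![t₀, 1] := by
        funext i
        fin_cases i <;> simp [hg1]
      rw [h2] at h1
      rw [hq, ← aeval_eq_eval', h1, aeval_eq_eval', heval]
    have hcoeffq : coeff (Finsupp.single 1 d) q = 0 := by
      rw [← eval01_eq_coeff hqhom, heval01]
    have hX0 : (X 0 : MvPolynomial (Fin 2) ℂ) ∣ q := X0_dvd hqhom hcoeffq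
    have hτq : τ q = p := by
      rw [hq]
      have h1 : τ (σA p) = MvPolynomial.aeval (fun i => τ (g1 i)) p :=
        MvPolynomial.comp_aeval_apply _ _ _
      have h2 : (fun i => τ (g1 i)) = (X : Fin 2 → MvPolynomial (Fin 2) ℂ) := by
        funext i
        fin_cases i <;> simp [hg1, hτ]
      rw [h1, h2, MvPolynomial.aeval_X_left_apply]
    have hdvd : τ (X 0) ∣ p := hτq ▸ map_dvd τ hX0
    have hτX0 : τ (X 0 : MvPolynomial (Fin 2) ℂ) = X 0 - C t₀ * X 1 := by
      simp [hτ]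
    refine ⟨t₀, 1, by simp, ?_⟩
    rw [show (C (1:ℂ) : MvPolynomial (Fin 2) ℂ) = 1 from map_one C, one_mul]
    rwa [hτX0] at hdvd

lemma det_isHomogeneous {k : ℕ} (M : Matrix (Fin k) (Fin k) (MvPolynomial (Fin 2) ℂ))
    (h : ∀ i j, (M i j).IsHomogeneous 1) : M.det.IsHomogeneous k := by
  rw [Matrix.det_apply]
  apply MvPolynomial.IsHomogeneous.sum
  intro σ _
  have hprod : (∏ i, M (σ i) i).IsHomogeneous k := by
    have := MvPolynomial.IsHomogeneous.prod Finset.univ (fun i => M (σ i) i) (fun _ => 1)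
      (fun i _ => h _ _)
    simpa using this
  rcases Int.units_eq_one_or (Equiv.Perm.sign σ) with hs | hs <;> rw [hs]
  · simpa using hprod
  · simpa [Units.smul_def] using hprod.neg

/-- If the top left `k × (n-k)` blocks of the symmetric matrices `A` and `B` vanish
(for some `1 ≤ k ≤ n/2`), then the binary form `det(Ax - By)` has discriminant zero:
it is divisible by the square of a nonzero linear form. -/
theorem det_discriminant_zero_of_block_vanishing (n k : ℕ) (hn : 2 ≤ n)
    (hk1 : 1 ≤ k) (hk2 : 2 * k ≤ n)
    (A B : Matrix (Fin n) (Fin n) ℂ) (hA : A.IsSymm) (hB : B.IsSymm)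
    (hzero : ∀ i j : Fin n, (i : ℕ) < k → (j : ℕ) < n - k → A i j = 0 ∧ B i j = 0) :
    ∃ x₀ y₀ : ℂ, (x₀, y₀) ≠ (0, 0) ∧
      (C y₀ * X 0 - C x₀ * X 1 : MvPolynomial (Fin 2) ℂ) ^ 2 ∣ pairDet A B := by
  classical
  set M : Matrix (Fin n) (Fin n) (MvPolynomial (Fin 2) ℂ) :=
    Matrix.of fun i j => (C (A i j) * X 0 - C (B i j) * X 1) with hM
  have hMsymm : ∀ i j, M i j = M j i := by
    intro i j
    simp only [hM, Matrix.of_apply, hA.apply, hB.apply]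
  have hM0 : ∀ i j : Fin n, (i : ℕ) < k → (j : ℕ) < n - k → M i j = 0 := by
    intro i j hi hj
    obtain ⟨h1, h2⟩ := hzero i j hi hj
    simp [hM, h1, h2]
  have hM0' : ∀ i j : Fin n, (i : ℕ) < n - k → (j : ℕ) < k → M i j = 0 := by
    intro i j hi hj
    rw [hMsymm]
    exact hM0 j i hj hi
  -- the column-swapping involution: swaps first k and last k indices
  let f : Fin n → Fin n := fun j =>
    if h : (j : ℕ) < k then ⟨(j : ℕ) + (n - k), by omega⟩
    else if h2 : n - k ≤ (j : ℕ) then ⟨(j : ℕ) - (n - k), by have := j.2; omega⟩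
    else j
  have hfval : ∀ j : Fin n, ((f j : Fin n) : ℕ) =
      if (j : ℕ) < k then (j : ℕ) + (n - k)
      else if n - k ≤ (j : ℕ) then (j : ℕ) - (n - k) else (j : ℕ) := by
    intro j
    simp only [f]
    split_ifs <;> rfl
  have hinv : Function.Involutive f := by
    intro j
    have h1 := hfval (f j)
    have h2 := hfval j
    have hjn := j.2
    apply Fin.ext
    rw [h1, h2]
    split_ifs <;> omega
  let π : Equiv.Perm (Fin n) := hinv.toPerm f
  have hπval : ∀ j : Fin n, ((π j : Fin n) : ℕ) =
      if (j : ℕ) < k then (j : ℕ) + (n - k)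
      else if n - k ≤ (j : ℕ) then (j : ℕ) - (n - k) else (j : ℕ) := by
    intro j
    exact hfval j
  let b : Fin n → ℕ := fun i => if (i : ℕ) < k then 2 else if (i : ℕ) < n - k then 1 else 0
  set N : Matrix (Fin n) (Fin n) (MvPolynomial (Fin 2) ℂ) := M.submatrix id π with hN
  have hNapp : ∀ i j, N i j = M i (π j) := fun i j => rfl
  have hbt : N.BlockTriangular b := by
    intro i j hlt
    rw [hNapp]
    by_cases hik : (i : ℕ) < k
    · have hjk : ¬ (j : ℕ) < k := by
        intro h
        simp only [b, if_pos hik, if_pos h] at hlt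
        omega
      apply hM0 i (π j) hik
      rw [hπval]
      have hjn := j.2
      split_ifs <;> omega
    · by_cases him : (i : ℕ) < n - k
      · have hj : n - k ≤ (j : ℕ) := by
          by_contra h
          simp only [b, if_pos, if_neg hik, if_pos him] at hlt
          split_ifs at hlt <;> omega
        apply hM0' i (π j) him
        rw [hπval, if_neg (by omega), if_pos hj]
        omega
      · exfalso
        simp only [b, if_neg hik, if_neg him] at hlt
        split_ifs at hlt <;> omega
  have hb2 : ∀ i : Fin n, b i = 2 ↔ (i : ℕ) < k := by
    intro i
    simp only [b]
    split_ifs <;> constructor <;> intro h <;> first | exact h.elim | omega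
  have hb0 : ∀ i : Fin n, b i = 0 ↔ n - k ≤ (i : ℕ) := by
    intro i
    simp only [b]
    split_ifs <;> constructor <;> intro h <;> first | exact h.elim | omega
  let e2 : Fin k ≃ {i : Fin n // b i = 2} :=
    { toFun := fun i => ⟨⟨(i : ℕ), by have := i.2; omega⟩, (hb2 _).mpr i.2⟩
      invFun := fun x => ⟨(x.1 : ℕ), (hb2 _).mp x.2⟩
      left_inv := fun i => Fin.ext rfl
      right_inv := fun x => Subtype.ext (Fin.ext rfl) }
  let e0 : Fin k ≃ {i : Fin n // b i = 0} :=
    { toFun := fun i => ⟨⟨n - k + (i : ℕ), by have := i.2; omega⟩,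
        (hb0 _).mpr (by show n - k ≤ n - k + (i : ℕ); omega)⟩
      invFun := fun x => ⟨(x.1 : ℕ) - (n - k), by
        have h1 := (hb0 _).mp x.2
        have h2 := x.1.2
        omega⟩
      left_inv := fun i => Fin.ext (by
        show n - k + (i : ℕ) - (n - k) = (i : ℕ)
        omega)
      right_inv := fun x => Subtype.ext (Fin.ext (by
        have h1 := (hb0 _).mp x.2
        show n - k + ((x.1 : ℕ) - (n - k)) = (x.1 : ℕ)
        omega)) }
  set P : Matrix (Fin k) (Fin k) (MvPolynomial (Fin 2) ℂ) :=
    (N.toSquareBlock b 2).submatrix e2 e2 with hP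
  have hP2 : (N.toSquareBlock b 2).det = P.det :=
    (Matrix.det_submatrix_equiv_self e2 _).symm
  have hkey0 : ∀ t : Fin k, π ((e0 t).1) = (e2 t).1 := by
    intro t
    have ht := t.2
    apply Fin.ext
    rw [hπval]
    have hval : (((e0 t).1 : Fin n) : ℕ) = n - k + (t : ℕ) := rfl
    have hval2 : (((e2 t).1 : Fin n) : ℕ) = (t : ℕ) := rfl
    rw [hval, hval2, if_neg (by omega), if_pos (by omega)]
    omega
  have hkey2 : ∀ t : Fin k, π ((e2 t).1) = (e0 t).1 := by
    intro t
    have ht := t.2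
    apply Fin.ext
    rw [hπval]
    have hval : (((e2 t).1 : Fin n) : ℕ) = (t : ℕ) := rfl
    have hval0 : (((e0 t).1 : Fin n) : ℕ) = n - k + (t : ℕ) := rfl
    rw [hval, hval0, if_pos (by omega)]
    omega
  have hP0 : (N.toSquareBlock b 0).det = P.det := by
    rw [← Matrix.det_submatrix_equiv_self e0 (N.toSquareBlock b 0)]
    have heq : (N.toSquareBlock b 0).submatrix e0 e0 = P.transpose := by
      refine Matrix.ext fun i j => ?_
      simp only [Matrix.submatrix_apply, Matrix.toSquareBlock_def, Matrix.of_apply,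
        Matrix.transpose_apply, hP]
      rw [hNapp, hNapp, hkey0 j, hkey2 i]
      exact hMsymm _ _
    rw [heq, Matrix.det_transpose]
  have hPhom : P.det.IsHomogeneous k := by
    apply det_isHomogeneous
    intro i j
    simp only [hP, Matrix.submatrix_apply, Matrix.toSquareBlock_def, Matrix.of_apply]
    rw [hNapp]
    simp only [hM, Matrix.of_apply]
    exact (MvPolynomial.isHomogeneous_C_mul_X _ (0 : Fin 2)).sub
      (MvPolynomial.isHomogeneous_C_mul_X _ (1 : Fin 2))
  have h2mem : (2 : ℕ) ∈ Finset.univ.image b :=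
    Finset.mem_image.mpr ⟨⟨0, by omega⟩, Finset.mem_univ _, (hb2 _).mpr (by show (0 : ℕ) < k; omega)⟩
  have h0mem : (0 : ℕ) ∈ (Finset.univ.image b).erase 2 := by
    refine Finset.mem_erase.mpr ⟨by norm_num, ?_⟩
    exact Finset.mem_image.mpr ⟨⟨n - 1, by omega⟩, Finset.mem_univ _, (hb0 _).mpr (by show n - k ≤ n - 1; omega)⟩
  have hdvdN : P.det ^ 2 ∣ N.det := by
    rw [hbt.det, ← Finset.mul_prod_erase _ _ h2mem, ← Finset.mul_prod_erase _ _ h0mem,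
      hP2, hP0]
    exact ⟨(∏ x ∈ ((Finset.image b Finset.univ).erase 2).erase 0, (N.toSquareBlock b x).det),
      by ring⟩
  have hdvdM : P.det ^ 2 ∣ M.det := by
    have hNdet := Matrix.det_permute' π M
    rw [← hN] at hNdet
    rcases Int.units_eq_one_or (Equiv.Perm.sign π) with hs | hs <;> rw [hs] at hNdet
    · simp only [Units.val_one, Int.cast_one, one_mul] at hNdet
      rwa [← hNdet]
    · simp only [Units.val_neg, Units.val_one, Int.cast_neg, Int.cast_one, neg_one_mul] at hNdet
      rw [show M.det = -N.det from by rw [hNdet]; ring]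
      exact (dvd_neg).mpr hdvdN
  obtain ⟨x₀, y₀, hne, hlin⟩ := exists_linear_dvd k (by omega) P.det hPhom
  exact ⟨x₀, y₀, hne, dvd_trans (pow_dvd_pow_of_dvd hlin 2) hdvdM⟩
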